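/- In one space dimension, if (ρ,u) is a classical solution of the pressureless Navier–Stokes system ∂_t ρ + ∂_x(ρu) = 0, ∂_t(ρu) + ∂_x(ρu²) − ∂_x(μ(ρ)∂_x u) = 0 with ρ > 0 and μ smooth, then w := u + (μ(ρ)/ρ²)∂_x ρ · 1 satisfies ∂_t(ρw) + ∂_x(ρwu) = 0, provided P is defined so that ∂_x P(ρ) = (μ(ρ)/ρ²)∂_x ρ with P'(r) = μ(r)/r², and w = u + ∂_x P(ρ). -/

import Mathlib

open MeasureTheory Set

def unc (f : ℝ → ℝ → ℝ) : ℝ × ℝ → ℝ := fun q => f q.1 q.2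

noncomputable def pt (f : ℝ × ℝ → ℝ) : ℝ × ℝ → ℝ := fun q => fderiv ℝ f q (1, 0)

noncomputable def px (f : ℝ × ℝ → ℝ) : ℝ × ℝ → ℝ := fun q => fderiv ℝ f q (0, 1)

lemma slice1 (f : ℝ × ℝ → ℝ) {t x : ℝ} (hf : DifferentiableAt ℝ f (t, x)) :
    HasDerivAt (fun s => f (s, x)) (pt f (t, x)) t := by
  have h : HasDerivAt (fun s : ℝ => (s, x)) ((1 : ℝ), (0 : ℝ)) t :=
    (hasDerivAt_id t).prodMk (hasDerivAt_const t x)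
  exact hf.hasFDerivAt.comp_hasDerivAt t h

lemma slice2 (f : ℝ × ℝ → ℝ) {t x : ℝ} (hf : DifferentiableAt ℝ f (t, x)) :
    HasDerivAt (fun y => f (t, y)) (px f (t, x)) x := by
  have h : HasDerivAt (fun y : ℝ => (t, y)) ((0 : ℝ), (1 : ℝ)) x :=
    (hasDerivAt_const x t).prodMk (hasDerivAt_id x)
  exact hf.hasFDerivAt.comp_hasDerivAt x h

lemma pd_contDiff {f : ℝ × ℝ → ℝ} (hf : ContDiff ℝ 2 f) (v : ℝ × ℝ) :
    ContDiff ℝ 1 (fun q => fderiv ℝ f q v) :=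
  (hf.fderiv_right (by norm_num)).clm_apply contDiff_const

lemma mixed_symm {f : ℝ × ℝ → ℝ} (hf : ContDiff ℝ 2 f) (q v w : ℝ × ℝ) :
    fderiv ℝ (fun p => fderiv ℝ f p v) q w = fderiv ℝ (fun p => fderiv ℝ f p w) q v := by
  have hsym : IsSymmSndFDerivAt ℝ f q := hf.contDiffAt.isSymmSndFDerivAt (by norm_num)
  have hd : DifferentiableAt ℝ (fderiv ℝ f) q :=
    ((hf.fderiv_right (m := 1) (by norm_num)).differentiable one_ne_zero).differentiableAt
  have key : ∀ a b : ℝ × ℝ, fderiv ℝ (fun p => fderiv ℝ f p a) q b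
      = fderiv ℝ (fderiv ℝ f) q b a := by
    intro a b
    rw [fderiv_clm_apply hd (differentiableAt_const a)]
    simp
  rw [key, key, hsym.eq]

theorem stmt6 (T : ℝ) (hT : 0 < T)
    (ρ u : ℝ → ℝ → ℝ) (μ P : ℝ → ℝ) (c : ℝ) (hc : 0 < c)
    (hρ : ContDiff ℝ 2 (fun q : ℝ × ℝ => ρ q.1 q.2))
    (hu : ContDiff ℝ 2 (fun q : ℝ × ℝ => u q.1 q.2))
    (hρpos : ∀ t x, c ≤ ρ t x)
    (hμ : ContDiffOn ℝ 1 μ (Ioi 0))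
    (hPdiff : ∀ r ∈ Ioi (0:ℝ), DifferentiableAt ℝ P r)
    (hP' : ∀ r ∈ Ioi (0:ℝ), deriv P r = μ r / r^2)
    (mass : ∀ t x, deriv (fun s => ρ s x) t + deriv (fun y => ρ t y * u t y) x = 0)
    (mom : ∀ t x, deriv (fun s => ρ s x * u s x) t
        + deriv (fun y => ρ t y * (u t y)^2) x
        - deriv (fun y => μ (ρ t y) * deriv (fun z => u t z) y) x = 0) :
    ∀ t x, deriv (fun s => ρ s x * (u s x + deriv (fun y => P (ρ s y)) x)) t
      + deriv (fun y => ρ t y * (u t y + deriv (fun z => P (ρ t z)) y) * u t y) x = 0 := by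
  intro t x
  have hR : ContDiff ℝ 2 (unc ρ) := hρ
  have hU : ContDiff ℝ 2 (unc u) := hu
  have hRd : Differentiable ℝ (unc ρ) := hR.differentiable (by norm_num)
  have hUd : Differentiable ℝ (unc u) := hU.differentiable (by norm_num)
  have hRXc : ContDiff ℝ 1 (px (unc ρ)) := pd_contDiff hR _
  have hRTc : ContDiff ℝ 1 (pt (unc ρ)) := pd_contDiff hR _
  have hUXc : ContDiff ℝ 1 (px (unc u)) := pd_contDiff hU _
  have hpos : ∀ a b : ℝ, 0 < ρ a b := fun a b => lt_of_lt_of_le hc (hρpos a b)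
  have hne : ∀ a b : ℝ, ρ a b ≠ 0 := fun a b => (hpos a b).ne'
  have hμd : ∀ a b : ℝ, HasDerivAt μ (deriv μ (ρ a b)) (ρ a b) := fun a b =>
    ((hμ.differentiableOn one_ne_zero).differentiableAt
      (isOpen_Ioi.mem_nhds (hpos a b))).hasDerivAt
  have hPd : ∀ a b : ℝ, HasDerivAt P (μ (ρ a b) / (ρ a b)^2) (ρ a b) := fun a b => by
    have h := (hPdiff _ (hpos a b)).hasDerivAt
    rwa [hP' _ (hpos a b)] at h
  have hRx : ∀ a b : ℝ, HasDerivAt (fun y => ρ a y) (px (unc ρ) (a, b)) b :=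
    fun a b => slice2 (unc ρ) (hRd _)
  have hRt : ∀ a b : ℝ, HasDerivAt (fun s => ρ s b) (pt (unc ρ) (a, b)) a :=
    fun a b => slice1 (unc ρ) (hRd _)
  have hUx : ∀ a b : ℝ, HasDerivAt (fun y => u a y) (px (unc u) (a, b)) b :=
    fun a b => slice2 (unc u) (hUd _)
  have hUt : ∀ a b : ℝ, HasDerivAt (fun s => u s b) (pt (unc u) (a, b)) a :=
    fun a b => slice1 (unc u) (hUd _)
  have hPder : ∀ a b : ℝ,
      deriv (fun y => P (ρ a y)) b = μ (ρ a b) / (ρ a b)^2 * px (unc ρ) (a, b) :=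
    fun a b => ((hPd a b).comp b (hRx a b)).deriv
  have hUXval : ∀ a b : ℝ, deriv (fun z => u a z) b = px (unc u) (a, b) :=
    fun a b => (hUx a b).deriv
  -- uncurried mass equation
  have mass' : ∀ a b : ℝ,
      pt (unc ρ) (a, b) + (px (unc ρ) (a, b) * u a b + ρ a b * px (unc u) (a, b)) = 0 := by
    intro a b
    have h := mass a b
    rw [(hRt a b).deriv, ((hRx a b).fun_mul (hUx a b)).deriv] at h
    exact h
  -- second order slices at (t, x)
  have hRXx : HasDerivAt (fun y => px (unc ρ) (t, y)) (px (px (unc ρ)) (t, x)) x :=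
    slice2 _ ((hRXc.differentiable one_ne_zero) _)
  have hRXt : HasDerivAt (fun s => px (unc ρ) (s, x)) (pt (px (unc ρ)) (t, x)) t :=
    slice1 _ ((hRXc.differentiable one_ne_zero) _)
  have hUXx : HasDerivAt (fun y => px (unc u) (t, y)) (px (px (unc u)) (t, x)) x :=
    slice2 _ ((hUXc.differentiable one_ne_zero) _)
  have hRTx : HasDerivAt (fun y => pt (unc ρ) (t, y)) (px (pt (unc ρ)) (t, x)) x :=
    slice2 _ ((hRTc.differentiable one_ne_zero) _)
  have hsymval : px (pt (unc ρ)) (t, x) = pt (px (unc ρ)) (t, x) :=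
    mixed_symm hR (t, x) (1, 0) (0, 1)
  -- x-derivative of the mass equation
  have massx0 : pt (px (unc ρ)) (t, x)
      + ((px (px (unc ρ)) (t, x) * u t x + px (unc ρ) (t, x) * px (unc u) (t, x))
        + (px (unc ρ) (t, x) * px (unc u) (t, x) + ρ t x * px (px (unc u)) (t, x))) = 0 := by
    have hmassx := hRTx.fun_add ((hRXx.fun_mul (hUx t x)).fun_add ((hRx t x).fun_mul hUXx))
    have hmassfun : (fun y => pt (unc ρ) (t, y)
        + (px (unc ρ) (t, y) * u t y + ρ t y * px (unc u) (t, y))) = fun _ => (0:ℝ) :=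
      funext fun y => mass' t y
    have h2 : HasDerivAt (fun y => pt (unc ρ) (t, y)
        + (px (unc ρ) (t, y) * u t y + ρ t y * px (unc u) (t, y))) 0 x := by
      rw [hmassfun]; exact hasDerivAt_const x 0
    have h3 := hmassx.unique h2
    rw [← hsymval]
    linarith [h3]
  -- uncurried momentum equation at (t, x)
  have hMx : HasDerivAt (fun y => μ (ρ t y)) (deriv μ (ρ t x) * px (unc ρ) (t, x)) x :=
    (hμd t x).comp x (hRx t x)
  have hMt : HasDerivAt (fun s => μ (ρ s x)) (deriv μ (ρ t x) * pt (unc ρ) (t, x)) t :=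
    (hμd t x).comp t (hRt t x)
  have mom0 : (pt (unc ρ) (t, x) * u t x + ρ t x * pt (unc u) (t, x))
      + (px (unc ρ) (t, x) * (u t x)^2
        + ρ t x * (↑2 * u t x ^ (2 - 1) * px (unc u) (t, x)))
      - (deriv μ (ρ t x) * px (unc ρ) (t, x) * px (unc u) (t, x)
        + μ (ρ t x) * px (px (unc u)) (t, x)) = 0 := by
    have h := mom t x
    have e3 : (fun y => μ (ρ t y) * deriv (fun z => u t z) y)
        = (fun y => μ (ρ t y) * px (unc u) (t, y)) := funext fun y => by rw [hUXval t y]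
    rw [((hRt t x).fun_mul (hUt t x)).deriv, ((hRx t x).fun_mul ((hUx t x).fun_pow 2)).deriv,
      e3, (hMx.fun_mul hUXx).deriv] at h
    exact h
  -- rewrite the goal
  have e1 : (fun s => ρ s x * (u s x + deriv (fun y => P (ρ s y)) x))
      = (fun s => ρ s x * (u s x + μ (ρ s x) / (ρ s x)^2 * px (unc ρ) (s, x))) :=
    funext fun s => by rw [hPder s x]
  have e2 : (fun y => ρ t y * (u t y + deriv (fun z => P (ρ t z)) y) * u t y)
      = (fun y => ρ t y * (u t y + μ (ρ t y) / (ρ t y)^2 * px (unc ρ) (t, y)) * u t y) :=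
    funext fun y => by rw [hPder t y]
  rw [e1, e2]
  have hT1 := (hRt t x).fun_mul ((hUt t x).fun_add
    ((hMt.fun_div ((hRt t x).fun_pow 2) (pow_ne_zero 2 (hne t x))).fun_mul hRXt))
  have hT2 := ((hRx t x).fun_mul ((hUx t x).fun_add
    ((hMx.fun_div ((hRx t x).fun_pow 2) (pow_ne_zero 2 (hne t x))).fun_mul hRXx))).fun_mul (hUx t x)
  rw [hT1.deriv, hT2.deriv]
  -- pure algebra
  set r := ρ t x with hr
  set u0 := u t x
  set rt := pt (unc ρ) (t, x)
  set rx := px (unc ρ) (t, x)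
  set ut := pt (unc u) (t, x)
  set ux := px (unc u) (t, x)
  set rxt := pt (px (unc ρ)) (t, x)
  set rxx := px (px (unc ρ)) (t, x)
  set uxx := px (px (unc u)) (t, x)
  set m := μ (ρ t x)
  set m' := deriv μ (ρ t x)
  have hr0 : r ≠ 0 := hne t x
  have hm : mass' t x = mass' t x := rfl
  have mass0 := mass' t x
  field_simp
  linear_combination r^3 * mom0 + m * r^2 * massx0 + (m' * r - m) * rx * r * mass0
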